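/- Let q, θ : Ω → ℝ be measurable exponent functions with 1 < q_- := ess inf q ≤ ess sup q =: q_+ < ∞, ess sup θ < ∞, and q(x) − 1 ≤ θ(x) for a.e. x ∈ Ω (so that θ(x)/(q(x) − 1) ≥ 1 a.e.). Let u and u_n (n ∈ ℕ) be measurable functions from Ω to ℝ with |u|_{θ(·)} < ∞ and |u_n|_{θ(·)} < ∞ for all n, and suppose |u_n − u|_{θ(·)} → 0 as n → ∞. Then | |u_n|^{q(·)−2}u_n − |u|^{q(·)−2}u |_{θ(·)/(q(·)−1)} → 0 as n → ∞. -/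

import Mathlib

open MeasureTheory Filter Topology
open scoped ENNReal

/-- Luxemburg gauge `|u|_{p(·)}` (value `∞` if no admissible `μ > 0` exists). -/
noncomputable def luxNorm {α : Type*} [MeasurableSpace α] (μ : Measure α) (p u : α → ℝ) : ℝ≥0∞ :=
  sInf (ENNReal.ofReal '' {m : ℝ | 0 < m ∧ ∫⁻ x, ENNReal.ofReal (|u x / m| ^ p x) ∂μ ≤ 1})

/-- `|s|^{q−2}·s`, i.e. `|s|^{q−1}·sign(s)`, with value `0` at `s = 0`. -/
noncomputable def powMap (q s : ℝ) : ℝ := if s = 0 then 0 else |s| ^ (q - 1) * Real.sign s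

noncomputable def phi (α s : ℝ) : ℝ := |s| ^ α * Real.sign s

lemma phi_of_nonneg {α s : ℝ} (hα : α ≠ 0) (hs : 0 ≤ s) : phi α s = s ^ α := by
  rcases hs.lt_or_eq with h | h
  · simp [phi, Real.sign_of_pos h, abs_of_pos h]
  · simp [phi, ← h, Real.sign_zero, Real.zero_rpow hα]

lemma phi_neg (α s : ℝ) : phi α (-s) = - phi α s := by
  simp [phi, Real.sign_neg, mul_neg]

lemma real_rpow_add_le {x y p : ℝ} (hx : 0 ≤ x) (hy : 0 ≤ y) (h0 : 0 ≤ p) (h1 : p ≤ 1) :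
    (x + y) ^ p ≤ x ^ p + y ^ p := by
  lift x to NNReal using hx
  lift y to NNReal using hy
  exact_mod_cast NNReal.rpow_add_le_add_rpow x y h0 h1

lemma small_nonneg {α a b : ℝ} (h0 : 0 < α) (h1 : α ≤ 1) (hb : 0 ≤ b) (hba : b ≤ a) :
    |phi α a - phi α b| ≤ 2 * |a - b| ^ α := by
  have ha : 0 ≤ a := hb.trans hba
  rw [phi_of_nonneg h0.ne' ha, phi_of_nonneg h0.ne' hb]
  have h2 : b ^ α ≤ a ^ α := Real.rpow_le_rpow hb hba h0.le
  rw [abs_of_nonneg (sub_nonneg.2 h2), abs_of_nonneg (sub_nonneg.2 hba)]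
  have : a ^ α ≤ (a - b) ^ α + b ^ α := by
    have := real_rpow_add_le (sub_nonneg.2 hba) hb h0.le h1
    rwa [sub_add_cancel] at this
  nlinarith [Real.rpow_nonneg (sub_nonneg.2 hba) α]

lemma small_opp {α a b : ℝ} (h0 : 0 < α) (ha : 0 ≤ a) (hb : b ≤ 0) :
    |phi α a - phi α b| ≤ 2 * |a - b| ^ α := by
  have hnb : 0 ≤ -b := neg_nonneg.2 hb
  have hab : 0 ≤ a - b := by linarith
  rw [phi_of_nonneg h0.ne' ha, show phi α b = - phi α (-b) by rw [← phi_neg]; ring_nf,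
    phi_of_nonneg h0.ne' hnb]
  have e1 : a ^ α ≤ (a - b) ^ α := Real.rpow_le_rpow ha (by linarith) h0.le
  have e2 : (-b) ^ α ≤ (a - b) ^ α := Real.rpow_le_rpow hnb (by linarith) h0.le
  have p1 : (0:ℝ) ≤ a ^ α := Real.rpow_nonneg ha α
  have p2 : (0:ℝ) ≤ (-b) ^ α := Real.rpow_nonneg hnb α
  rw [sub_neg_eq_add, abs_of_nonneg (by positivity), abs_of_nonneg hab]
  linarith

lemma phi_small {α a b : ℝ} (h0 : 0 < α) (h1 : α ≤ 1) :
    |phi α a - phi α b| ≤ 2 * |a - b| ^ α := by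
  rcases le_total 0 a with ha | ha <;> rcases le_total 0 b with hb | hb
  · rcases le_total b a with h | h
    · exact small_nonneg h0 h1 hb h
    · rw [abs_sub_comm, abs_sub_comm a b]; exact small_nonneg h0 h1 ha h
  · exact small_opp h0 ha hb
  · rw [abs_sub_comm, abs_sub_comm a b]; exact small_opp h0 hb ha
  · have e1 : |phi α (-a) - phi α (-b)| = |phi α a - phi α b| := by
      rw [phi_neg, phi_neg, abs_sub_comm]; congr 1; ring
    have e2 : |(-a) - (-b)| = |a - b| := by rw [abs_sub_comm]; congr 1; ring
    rw [← e1, ← e2]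
    rcases le_total (-b) (-a) with h | h
    · exact small_nonneg h0 h1 (neg_nonneg.2 hb) h
    · rw [abs_sub_comm, abs_sub_comm (-a)]; exact small_nonneg h0 h1 (neg_nonneg.2 ha) h

lemma bernoulli_rpow {α a b : ℝ} (h1 : 1 ≤ α) (hb : 0 ≤ b) (hba : b ≤ a) :
    a ^ α - b ^ α ≤ α * a ^ (α - 1) * (a - b) := by
  have ha : 0 ≤ a := hb.trans hba
  rcases ha.lt_or_eq with hpos | h0
  · have hs : -1 ≤ b / a - 1 := by
      have : 0 ≤ b / a := div_nonneg hb ha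
      linarith
    have hber := one_add_mul_self_le_rpow_one_add hs h1
    rw [add_sub_cancel] at hber
    have hmul := mul_le_mul_of_nonneg_left hber (Real.rpow_nonneg ha α)
    have e1 : a ^ α * (b / a) ^ α = b ^ α := by
      rw [← Real.mul_rpow ha (div_nonneg hb ha), mul_div_cancel₀ _ hpos.ne']
    have e2 : a ^ (α - 1) * a = a ^ α := by
      rw [← Real.rpow_add_one hpos.ne' (α - 1), sub_add_cancel]
    have e3 : a ^ α * (b / a) = a ^ (α - 1) * b := by
      rw [← e2]; field_simp
    have expand : a ^ α * (1 + α * (b / a - 1)) = a ^ α + α * (a ^ (α - 1) * b) - α * a ^ α := by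
      rw [← e3]; ring
    rw [e1, expand] at hmul
    have e4 : α * a ^ (α - 1) * (a - b) = α * a ^ α - α * (a ^ (α - 1) * b) := by
      rw [← e2]; ring
    linarith
  · rw [← h0] at hba ⊢
    have : b = 0 := le_antisymm hba hb
    simp [this, Real.zero_rpow (by linarith : α ≠ 0)]

lemma rpow_le_factor {x y α : ℝ} (hx : 0 ≤ x) (hxy : x ≤ y) (h1 : 1 ≤ α) :
    x ^ α ≤ y ^ (α - 1) * x := by
  rcases hx.lt_or_eq with hpos | h0
  · have : x ^ α = x ^ (α - 1) * x := by
      rw [← Real.rpow_add_one hpos.ne' (α - 1), sub_add_cancel]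
    rw [this]
    exact mul_le_mul_of_nonneg_right (Real.rpow_le_rpow hx hxy (by linarith)) hx
  · rw [← h0, Real.zero_rpow (by linarith : α ≠ 0), mul_zero]

lemma large_nonneg {α a b : ℝ} (h1 : 1 ≤ α) (hb : 0 ≤ b) (hba : b ≤ a) :
    |phi α a - phi α b| ≤ (α + 1) * (|a| + |b|) ^ (α - 1) * |a - b| := by
  have ha : 0 ≤ a := hb.trans hba
  have hα : α ≠ 0 := by linarith
  rw [phi_of_nonneg hα ha, phi_of_nonneg hα hb]
  have h2 : b ^ α ≤ a ^ α := Real.rpow_le_rpow hb hba (by linarith)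
  rw [abs_of_nonneg (sub_nonneg.2 h2), abs_of_nonneg (sub_nonneg.2 hba),
    abs_of_nonneg ha, abs_of_nonneg hb]
  have key := bernoulli_rpow h1 hb hba
  have m1 : a ^ (α - 1) ≤ (a + b) ^ (α - 1) :=
    Real.rpow_le_rpow ha (by linarith) (by linarith)
  have m2 : (0:ℝ) ≤ (a + b) ^ (α - 1) := Real.rpow_nonneg (by linarith) _
  have s1 : α * a ^ (α - 1) * (a - b) ≤ α * (a + b) ^ (α - 1) * (a - b) := by
    apply mul_le_mul_of_nonneg_right _ (sub_nonneg.2 hba)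
    exact mul_le_mul_of_nonneg_left m1 (by linarith)
  have s2 : α * (a + b) ^ (α - 1) * (a - b) ≤ (α + 1) * (a + b) ^ (α - 1) * (a - b) := by
    apply mul_le_mul_of_nonneg_right _ (sub_nonneg.2 hba)
    exact mul_le_mul_of_nonneg_right (by linarith) m2
  linarith

lemma large_opp {α a b : ℝ} (h1 : 1 ≤ α) (ha : 0 ≤ a) (hb : b ≤ 0) :
    |phi α a - phi α b| ≤ (α + 1) * (|a| + |b|) ^ (α - 1) * |a - b| := by
  have hα : α ≠ 0 := by linarith
  have hnb : 0 ≤ -b := neg_nonneg.2 hb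
  have hab : 0 ≤ a - b := by linarith
  rw [show phi α b = - phi α (-b) by rw [← phi_neg]; ring_nf,
    phi_of_nonneg hα ha, phi_of_nonneg hα hnb, sub_neg_eq_add,
    abs_of_nonneg ha, abs_of_nonpos hb, abs_of_nonneg hab]
  have p1 : (0:ℝ) ≤ a ^ α := Real.rpow_nonneg ha α
  have p2 : (0:ℝ) ≤ (-b) ^ α := Real.rpow_nonneg hnb α
  rw [abs_of_nonneg (by positivity)]
  have t1 : a ^ α ≤ (a - b) ^ (α - 1) * a := rpow_le_factor ha (by linarith) h1
  have t2 : (-b) ^ α ≤ (a - b) ^ (α - 1) * (-b) := rpow_le_factor hnb (by linarith) h1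
  have m2 : (0:ℝ) ≤ (a - b) ^ (α - 1) := Real.rpow_nonneg hab _
  have : (a - b) ^ (α - 1) * a + (a - b) ^ (α - 1) * (-b) ≤ (α + 1) * (a + -b) ^ (α - 1) * (a - b) := by
    have : (a - b) ^ (α - 1) * a + (a - b) ^ (α - 1) * (-b) = 1 * (a + -b) ^ (α - 1) * (a - b) := by
      rw [show a + -b = a - b by ring]; ring
    rw [this]
    apply mul_le_mul_of_nonneg_right _ hab
    rw [show a + -b = a - b by ring]
    exact mul_le_mul_of_nonneg_right (by linarith) m2
  linarith

lemma phi_large {α a b : ℝ} (h1 : 1 ≤ α) :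
    |phi α a - phi α b| ≤ (α + 1) * (|a| + |b|) ^ (α - 1) * |a - b| := by
  rcases le_total 0 a with ha | ha <;> rcases le_total 0 b with hb | hb
  · rcases le_total b a with h | h
    · exact large_nonneg h1 hb h
    · rw [abs_sub_comm, abs_sub_comm a b, add_comm |a| |b|]; exact large_nonneg h1 ha h
  · exact large_opp h1 ha hb
  · rw [abs_sub_comm, abs_sub_comm a b, add_comm |a| |b|]; exact large_opp h1 hb ha
  · have e1 : |phi α (-a) - phi α (-b)| = |phi α a - phi α b| := by
      rw [phi_neg, phi_neg, abs_sub_comm]; congr 1; ring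
    have e2 : |(-a) - (-b)| = |a - b| := by rw [abs_sub_comm]; congr 1; ring
    have e3 : |(-a)| + |(-b)| = |a| + |b| := by rw [abs_neg, abs_neg]
    rw [← e1, ← e2, ← e3]
    rcases le_total (-b) (-a) with h | h
    · exact large_nonneg h1 (neg_nonneg.2 hb) h
    · rw [abs_sub_comm, abs_sub_comm (-a), add_comm |(-a)| |(-b)|]
      exact large_nonneg h1 (neg_nonneg.2 ha) h

lemma master {qm Q θp εr μ' : ℝ} (hqm : 1 < qm) (hQ : 2 ≤ Q) (hθp : 1 ≤ θp)
    (hε0 : 0 < εr) (hε1 : εr ≤ 1) (hμ0 : 0 < μ') (hμ1 : μ' ≤ 1)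
    {qx θx a b : ℝ} (h1 : qm ≤ qx) (h2 : qx ≤ Q) (h3 : qx - 1 ≤ θx) (h4 : θx ≤ θp) :
    (|phi (qx - 1) a - phi (qx - 1) b| / εr) ^ (θx / (qx - 1)) ≤
      ((Q + 1) / εr) ^ (θp / (qm - 1)) * μ' * (|a| + |b|) ^ θx
      + ((Q + 1) / εr) ^ (θp / (qm - 1)) * (1 + μ' ^ (1 - Q)) * |a - b| ^ θx := by
  set α := qx - 1 with hαdef
  set P := θp / (qm - 1) with hPdef
  set c := (Q + 1) / εr with hcdef
  set K := c ^ P with hKdef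
  set p := θx / α with hpdef
  set M := |a| + |b| with hMdef
  set D := |a - b| with hDdef
  have hα0 : 0 < α := by simp only [hαdef]; linarith
  have hθx0 : 0 < θx := by linarith
  have hp0 : 0 < p := div_pos hθx0 hα0
  have hαp : α * p = θx := by rw [hpdef, mul_div_cancel₀ _ hα0.ne']
  have hM0 : (0:ℝ) ≤ M := by positivity
  have hD0 : (0:ℝ) ≤ D := abs_nonneg _
  have hc1 : (1:ℝ) ≤ c := by
    rw [hcdef, le_div_iff₀ hε0]; linarith
  have hpP : p ≤ P := by
    rw [hpdef, hPdef]
    apply div_le_div₀ (by linarith) h4 (by linarith)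
    simp only [hαdef]; linarith
  have hcpK : c ^ p ≤ K := Real.rpow_le_rpow_of_exponent_le hc1 hpP
  have hK0 : (0:ℝ) ≤ K := Real.rpow_nonneg (by linarith) _
  have hMθ : (0:ℝ) ≤ M ^ θx := Real.rpow_nonneg hM0 _
  have hDθ : (0:ℝ) ≤ D ^ θx := Real.rpow_nonneg hD0 _
  have hμQ : (0:ℝ) ≤ μ' ^ (1 - Q) := Real.rpow_nonneg hμ0.le _
  rcases le_or_gt α 1 with hcase | hcase
  · -- small case
    have hb : |phi α a - phi α b| / εr ≤ (2 / εr) * D ^ α := by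
      rw [div_le_iff₀ hε0]
      calc |phi α a - phi α b| ≤ 2 * D ^ α := phi_small hα0 hcase
        _ = 2 / εr * D ^ α * εr := by field_simp
    have step : (|phi α a - phi α b| / εr) ^ p ≤ ((2 / εr) * D ^ α) ^ p :=
      Real.rpow_le_rpow (by positivity) hb hp0.le
    have expand : ((2 / εr) * D ^ α) ^ p = (2 / εr) ^ p * D ^ θx := by
      rw [Real.mul_rpow (by positivity) (Real.rpow_nonneg hD0 _),
        ← Real.rpow_mul hD0, hαp]
    have h2ε : (2 / εr) ^ p ≤ K := by
      refine le_trans (Real.rpow_le_rpow (by positivity) ?_ hp0.le) hcpK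
      rw [hcdef]; gcongr; linarith
    have : (|phi α a - phi α b| / εr) ^ p ≤ K * D ^ θx := by
      rw [expand] at step
      exact step.trans (mul_le_mul_of_nonneg_right h2ε hDθ)
    refine this.trans ?_
    have t1 : (0:ℝ) ≤ K * μ' * M ^ θx := by positivity
    nlinarith [mul_nonneg (mul_nonneg hK0 hμQ) hDθ]
  · -- large case
    have hα1 : 1 ≤ α := hcase.le
    have hαQ : α + 1 ≤ Q + 1 := by simp only [hαdef]; linarith
    have hb : |phi α a - phi α b| / εr ≤ c * (M ^ (α - 1) * D) := by
      rw [div_le_iff₀ hε0]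
      have hMα : (0:ℝ) ≤ M ^ (α - 1) := Real.rpow_nonneg hM0 _
      calc |phi α a - phi α b| ≤ (α + 1) * M ^ (α - 1) * D := phi_large hα1
        _ ≤ (Q + 1) * M ^ (α - 1) * D := by
            apply mul_le_mul_of_nonneg_right _ hD0
            exact mul_le_mul_of_nonneg_right hαQ hMα
        _ = c * (M ^ (α - 1) * D) * εr := by rw [hcdef]; field_simp
    have step : (|phi α a - phi α b| / εr) ^ p ≤ (c * (M ^ (α - 1) * D)) ^ p :=
      Real.rpow_le_rpow (by positivity) hb hp0.le
    have hMα : (0:ℝ) ≤ M ^ (α - 1) := Real.rpow_nonneg hM0 _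
    have expand : (c * (M ^ (α - 1) * D)) ^ p
        = c ^ p * (M ^ ((α - 1) * p) * D ^ p) := by
      rw [Real.mul_rpow (by linarith) (by positivity),
        Real.mul_rpow hMα hD0, ← Real.rpow_mul hM0]
    -- Young's inequality part
    have hα1' : 0 < α - 1 := by linarith
    have hconj : (α / (α - 1)).HolderConjugate α := by
      exact (Real.HolderConjugate.conjExponent hcase).symm
    set x := μ' ^ ((α - 1) / α) * M ^ ((α - 1) * p) with hxdef
    set y := μ' ^ (-((α - 1) / α)) * D ^ p with hydef
    have hx0 : 0 ≤ x := mul_nonneg (Real.rpow_nonneg hμ0.le _) (Real.rpow_nonneg hM0 _)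
    have hy0 : 0 ≤ y := mul_nonneg (Real.rpow_nonneg hμ0.le _) (Real.rpow_nonneg hD0 _)
    have hxy : M ^ ((α - 1) * p) * D ^ p = x * y := by
      rw [hxdef, hydef]
      have : μ' ^ ((α - 1) / α) * μ' ^ (-((α - 1) / α)) = 1 := by
        rw [← Real.rpow_add hμ0]; simp
      calc M ^ ((α - 1) * p) * D ^ p
          = (μ' ^ ((α - 1) / α) * μ' ^ (-((α - 1) / α))) * (M ^ ((α - 1) * p) * D ^ p) := by
            rw [this, one_mul]
        _ = _ := by ring
    have hyoung := Real.young_inequality_of_nonneg hx0 hy0 hconj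
    have hr1 : 1 ≤ α / (α - 1) := by rw [le_div_iff₀ hα1']; linarith
    have hxr : x ^ (α / (α - 1)) = μ' * M ^ θx := by
      rw [hxdef, Real.mul_rpow (Real.rpow_nonneg hμ0.le _) (Real.rpow_nonneg hM0 _),
        ← Real.rpow_mul hμ0.le, ← Real.rpow_mul hM0]
      congr 1
      · rw [show (α - 1) / α * (α / (α - 1)) = 1 by field_simp, Real.rpow_one]
      · congr 1
        rw [show (α - 1) * p * (α / (α - 1)) = α * p by field_simp, hαp]
    have hyr : y ^ α = μ' ^ (1 - α) * D ^ θx := by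
      rw [hydef, Real.mul_rpow (Real.rpow_nonneg hμ0.le _) (Real.rpow_nonneg hD0 _),
        ← Real.rpow_mul hμ0.le, ← Real.rpow_mul hD0]
      congr 2
      · field_simp; ring
      · rw [mul_comm p α, hαp]
    have hyoung2 : x * y ≤ μ' * M ^ θx + μ' ^ (1 - Q) * D ^ θx := by
      have d1 : x ^ (α / (α - 1)) / (α / (α - 1)) ≤ x ^ (α / (α - 1)) :=
        div_le_self (Real.rpow_nonneg hx0 _) hr1
      have d2 : y ^ α / α ≤ y ^ α := div_le_self (Real.rpow_nonneg hy0 _) hα1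
      have m1 : μ' ^ (1 - α) ≤ μ' ^ (1 - Q) :=
        Real.rpow_le_rpow_of_exponent_ge hμ0 hμ1 (by linarith)
      have m2 : μ' ^ (1 - α) * D ^ θx ≤ μ' ^ (1 - Q) * D ^ θx :=
        mul_le_mul_of_nonneg_right m1 hDθ
      calc x * y ≤ x ^ (α / (α - 1)) / (α / (α - 1)) + y ^ α / α := hyoung
        _ ≤ x ^ (α / (α - 1)) + y ^ α := add_le_add d1 d2
        _ = μ' * M ^ θx + μ' ^ (1 - α) * D ^ θx := by rw [hxr, hyr]
        _ ≤ μ' * M ^ θx + μ' ^ (1 - Q) * D ^ θx := by linarith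
    have final : (|phi α a - phi α b| / εr) ^ p
        ≤ K * (μ' * M ^ θx + μ' ^ (1 - Q) * D ^ θx) := by
      calc (|phi α a - phi α b| / εr) ^ p ≤ c ^ p * (M ^ ((α - 1) * p) * D ^ p) := by
            rw [← expand]; exact step
        _ ≤ c ^ p * (μ' * M ^ θx + μ' ^ (1 - Q) * D ^ θx) := by
            apply mul_le_mul_of_nonneg_left _ (Real.rpow_nonneg (by linarith) _)
            rw [hxy]; exact hyoung2
        _ ≤ K * (μ' * M ^ θx + μ' ^ (1 - Q) * D ^ θx) := by
            apply mul_le_mul_of_nonneg_right hcpK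
            positivity
    refine final.trans ?_
    have h := mul_nonneg hK0 hDθ
    have e1 : K * (μ' * M ^ θx + μ' ^ (1 - Q) * D ^ θx)
        = K * μ' * M ^ θx + K * μ' ^ (1 - Q) * D ^ θx := by ring
    have e2 : K * (1 + μ' ^ (1 - Q)) * D ^ θx
        = K * D ^ θx + K * μ' ^ (1 - Q) * D ^ θx := by ring
    rw [e1, e2]
    linarith

lemma powMap_eq_phi (q s : ℝ) : powMap q s = phi (q - 1) s := by
  unfold powMap phi
  split
  · simp [*, Real.sign_zero]
  · rfl


section M
variable {α : Type*} [MeasurableSpace α] {ρ : Measure α}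

lemma luxNorm_le {p v : α → ℝ} {m : ℝ} (hm : 0 < m)
    (h : ∫⁻ x, ENNReal.ofReal (|v x / m| ^ p x) ∂ρ ≤ 1) :
    luxNorm ρ p v ≤ ENNReal.ofReal m :=
  sInf_le ⟨m, ⟨hm, h⟩, rfl⟩

lemma luxNorm_lt_elim {p v : α → ℝ} {c : ℝ≥0∞} (h : luxNorm ρ p v < c) :
    ∃ m : ℝ, 0 < m ∧ ENNReal.ofReal m < c ∧
      ∫⁻ x, ENNReal.ofReal (|v x / m| ^ p x) ∂ρ ≤ 1 := by
  obtain ⟨e, he, hec⟩ := sInf_lt_iff.mp h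
  obtain ⟨m, hm, rfl⟩ := he
  exact ⟨m, hm.1, hec, hm.2⟩

lemma modular_le {w v : α → ℝ} {m β' : ℝ} (hm0 : 0 < m) (hm1 : m ≤ 1) (hβ : 0 < β')
    (hw : ∀ᵐ x ∂ρ, β' ≤ w x)
    (h : ∫⁻ x, ENNReal.ofReal (|v x / m| ^ w x) ∂ρ ≤ 1) :
    ∫⁻ x, ENNReal.ofReal (|v x| ^ w x) ∂ρ ≤ ENNReal.ofReal (m ^ β') := by
  have key : ∀ᵐ x ∂ρ, ENNReal.ofReal (|v x| ^ w x)
      ≤ ENNReal.ofReal (m ^ β') * ENNReal.ofReal (|v x / m| ^ w x) := by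
    filter_upwards [hw] with x hx
    rw [← ENNReal.ofReal_mul (Real.rpow_nonneg hm0.le _)]
    apply ENNReal.ofReal_le_ofReal
    have e1 : |v x| = m * |v x / m| := by
      rw [abs_div, abs_of_pos hm0]; field_simp
    calc |v x| ^ w x = m ^ w x * |v x / m| ^ w x := by
          rw [e1, Real.mul_rpow hm0.le (abs_nonneg _)]
      _ ≤ m ^ β' * |v x / m| ^ w x := by
          apply mul_le_mul_of_nonneg_right _ (Real.rpow_nonneg (abs_nonneg _) _)
          exact Real.rpow_le_rpow_of_exponent_ge hm0 hm1 hx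
  calc ∫⁻ x, ENNReal.ofReal (|v x| ^ w x) ∂ρ
      ≤ ∫⁻ x, ENNReal.ofReal (m ^ β') * ENNReal.ofReal (|v x / m| ^ w x) ∂ρ :=
        lintegral_mono_ae key
    _ = ENNReal.ofReal (m ^ β') * ∫⁻ x, ENNReal.ofReal (|v x / m| ^ w x) ∂ρ :=
        lintegral_const_mul' _ _ ENNReal.ofReal_ne_top
    _ ≤ ENNReal.ofReal (m ^ β') * 1 := by
        exact mul_le_mul_right h _
    _ = ENNReal.ofReal (m ^ β') := mul_one _

lemma modular_fin {w v : α → ℝ} {θp : ℝ} (hθp : 1 ≤ θp)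
    (hw0 : ∀ᵐ x ∂ρ, 0 ≤ w x)
    (hw : ∀ᵐ x ∂ρ, w x ≤ θp) (h : luxNorm ρ w v < ⊤) :
    ∃ T0 : ℝ, 0 ≤ T0 ∧ ∫⁻ x, ENNReal.ofReal (|v x| ^ w x) ∂ρ ≤ ENNReal.ofReal T0 := by
  obtain ⟨m, hm0, -, hmod⟩ := luxNorm_lt_elim h
  set M1 := max m 1 with hM1
  have hM11 : 1 ≤ M1 := le_max_right _ _
  have hM10 : 0 < M1 := lt_of_lt_of_le one_pos hM11
  refine ⟨M1 ^ θp, Real.rpow_nonneg hM10.le _, ?_⟩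
  have key : ∀ᵐ x ∂ρ, ENNReal.ofReal (|v x| ^ w x)
      ≤ ENNReal.ofReal (M1 ^ θp) * ENNReal.ofReal (|v x / m| ^ w x) := by
    filter_upwards [hw, hw0] with x hx hx0
    rw [← ENNReal.ofReal_mul (Real.rpow_nonneg hM10.le _)]
    apply ENNReal.ofReal_le_ofReal
    have e1 : |v x| = m * |v x / m| := by
      rw [abs_div, abs_of_pos hm0]; field_simp
    calc |v x| ^ w x = m ^ w x * |v x / m| ^ w x := by
          rw [e1, Real.mul_rpow hm0.le (abs_nonneg _)]
      _ ≤ M1 ^ θp * |v x / m| ^ w x := by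
          apply mul_le_mul_of_nonneg_right _ (Real.rpow_nonneg (abs_nonneg _) _)
          calc m ^ w x ≤ M1 ^ w x := Real.rpow_le_rpow hm0.le (le_max_left _ _) hx0
            _ ≤ M1 ^ θp := Real.rpow_le_rpow_of_exponent_le hM11 hx
  calc ∫⁻ x, ENNReal.ofReal (|v x| ^ w x) ∂ρ
      ≤ ∫⁻ x, ENNReal.ofReal (M1 ^ θp) * ENNReal.ofReal (|v x / m| ^ w x) ∂ρ :=
        lintegral_mono_ae key
    _ = ENNReal.ofReal (M1 ^ θp) * ∫⁻ x, ENNReal.ofReal (|v x / m| ^ w x) ∂ρ :=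
        lintegral_const_mul' _ _ ENNReal.ofReal_ne_top
    _ ≤ ENNReal.ofReal (M1 ^ θp) * 1 := mul_le_mul_right hmod _
    _ = ENNReal.ofReal (M1 ^ θp) := mul_one _

lemma sum_rpow_bound {θx θp a b : ℝ} (h0 : 0 ≤ θx) (h4 : θx ≤ θp) (hθp : 0 ≤ θp) :
    (|a| + |b|) ^ θx ≤ 2 ^ θp * |a - b| ^ θx + 4 ^ θp * |b| ^ θx := by
  set Mb := max (|a - b|) (2 * |b|) with hMb
  have hMb0 : 0 ≤ Mb := le_trans (abs_nonneg _) (le_max_left _ _)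
  have h1 : |a| + |b| ≤ 2 * Mb := by
    have : |a| ≤ |a - b| + |b| := by
      calc |a| = |(a - b) + b| := by ring_nf
        _ ≤ |a - b| + |b| := abs_add_le _ _
    have l1 : |a - b| ≤ Mb := le_max_left _ _
    have l2 : 2 * |b| ≤ Mb := le_max_right _ _
    linarith
  have h2 : (|a| + |b|) ^ θx ≤ (2 * Mb) ^ θx :=
    Real.rpow_le_rpow (by positivity) h1 h0
  have h3 : (2 * Mb) ^ θx = 2 ^ θx * Mb ^ θx := Real.mul_rpow (by norm_num) hMb0
  have h5 : Mb ^ θx ≤ |a - b| ^ θx + (2 * |b|) ^ θx := by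
    rcases max_choice (|a - b|) (2 * |b|) with h | h <;> rw [hMb, h]
    · have : (0:ℝ) ≤ (2 * |b|) ^ θx := Real.rpow_nonneg (by positivity) _
      linarith
    · have : (0:ℝ) ≤ |a - b| ^ θx := Real.rpow_nonneg (abs_nonneg _) _
      linarith
  have h6 : (2:ℝ) ^ θx ≤ 2 ^ θp := Real.rpow_le_rpow_of_exponent_le one_le_two h4
  have h7 : (2 * |b|) ^ θx = 2 ^ θx * |b| ^ θx := Real.mul_rpow (by norm_num) (abs_nonneg _)
  have h8 : (2:ℝ) ^ θp * 2 ^ θp = 4 ^ θp := by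
    rw [← Real.mul_rpow (by norm_num) (by norm_num)]; norm_num
  have hb0 : (0:ℝ) ≤ |b| ^ θx := Real.rpow_nonneg (abs_nonneg _) _
  have hd0 : (0:ℝ) ≤ |a - b| ^ θx := Real.rpow_nonneg (abs_nonneg _) _
  have h9 : (0:ℝ) < 2 ^ θp := Real.rpow_pos_of_pos (by norm_num) _
  calc (|a| + |b|) ^ θx ≤ 2 ^ θx * Mb ^ θx := by rw [← h3]; exact h2
    _ ≤ 2 ^ θp * Mb ^ θx := by
        apply mul_le_mul_of_nonneg_right h6 (Real.rpow_nonneg hMb0 _)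
    _ ≤ 2 ^ θp * (|a - b| ^ θx + 2 ^ θx * |b| ^ θx) := by
        apply mul_le_mul_of_nonneg_left _ h9.le
        rw [← h7]; exact h5
    _ ≤ 2 ^ θp * |a - b| ^ θx + 4 ^ θp * |b| ^ θx := by
        rw [mul_add, ← h8]
        have : 2 ^ θp * (2 ^ θx * |b| ^ θx) ≤ 2 ^ θp * (2 ^ θp * |b| ^ θx) := by
          apply mul_le_mul_of_nonneg_left _ h9.le
          exact mul_le_mul_of_nonneg_right h6 hb0
        linarith [this]

theorem aux (ρ : Measure α) (q θ : α → ℝ) (hqmeas : Measurable q) (hθmeas : Measurable θ)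
    (hqm : 1 < essInf q ρ)
    (hqM : ∃ C : ℝ, ∀ᵐ x ∂ρ, q x ≤ C)
    (hθM : ∃ C : ℝ, ∀ᵐ x ∂ρ, θ x ≤ C)
    (hqθ : ∀ᵐ x ∂ρ, q x - 1 ≤ θ x)
    (u : α → ℝ) (hu : Measurable u)
    (hufin : luxNorm ρ θ u < ⊤)
    (un : ℕ → α → ℝ) (hun : ∀ n, Measurable (un n))
    (hconv : Tendsto (fun n => luxNorm ρ θ (fun x => un n x - u x)) atTop (𝓝 0)) :
    Tendsto (fun n => luxNorm ρ (fun x => θ x / (q x - 1))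
        (fun x => powMap (q x) (un n x) - powMap (q x) (u x))) atTop (𝓝 0) := by
  rw [ENNReal.tendsto_nhds_zero]
  intro ε hε
  obtain ⟨r, hr0, hr1, hrε⟩ : ∃ r : ℝ, 0 < r ∧ r ≤ 1 ∧ ENNReal.ofReal r ≤ ε := by
    rcases eq_top_or_lt_top ε with h | h
    · exact ⟨1, one_pos, le_refl 1, h ▸ le_top⟩
    · refine ⟨min 1 ε.toReal, lt_min one_pos (ENNReal.toReal_pos hε.ne' h.ne), min_le_left _ _, ?_⟩
      calc ENNReal.ofReal (min 1 ε.toReal) ≤ ENNReal.ofReal ε.toReal :=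
            ENNReal.ofReal_le_ofReal (min_le_right _ _)
        _ = ε := ENNReal.ofReal_toReal h.ne
  suffices H : ∀ᶠ n in atTop, ∫⁻ x, ENNReal.ofReal
      (|(powMap (q x) (un n x) - powMap (q x) (u x)) / r| ^ (θ x / (q x - 1))) ∂ρ ≤ 1 by
    filter_upwards [H] with n hn
    exact le_trans (luxNorm_le hr0 hn) hrε
  -- constants
  set qm : ℝ := (1 + essInf q ρ) / 2 with hqmdef
  have hqm1 : 1 < qm := by rw [hqmdef]; linarith
  have hqmlt : qm < essInf q ρ := by rw [hqmdef]; linarith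
  have hb : Filter.IsBoundedUnder (· ≥ ·) (ae ρ) q := by
    by_contra hcon
    have hemp : {a : ℝ | ∀ᶠ x in ae ρ, a ≤ q x} = ∅ := by
      rw [Set.eq_empty_iff_forall_notMem]
      intro a ha
      exact hcon ⟨a, by rwa [Filter.eventually_map]⟩
    have h2 : essInf q ρ = sSup {a : ℝ | ∀ᶠ x in ae ρ, a ≤ q x} := Filter.liminf_eq
    rw [h2, hemp, Real.sSup_empty] at hqm
    linarith
  have hqlow : ∀ᵐ x ∂ρ, qm < q x :=
    Filter.eventually_lt_of_lt_liminf (show qm < Filter.liminf q (ae ρ) from hqmlt) hb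
  obtain ⟨Cq, hCq⟩ := hqM
  obtain ⟨Cθ, hCθ⟩ := hθM
  set Q : ℝ := max Cq 2 with hQdef
  have hQ2 : 2 ≤ Q := le_max_right _ _
  have hqQ : ∀ᵐ x ∂ρ, q x ≤ Q := by
    filter_upwards [hCq] with x hx; exact hx.trans (le_max_left _ _)
  set θp : ℝ := max Cθ 1 with hθpdef
  have hθp1 : 1 ≤ θp := le_max_right _ _
  have hθub : ∀ᵐ x ∂ρ, θ x ≤ θp := by
    filter_upwards [hCθ] with x hx; exact hx.trans (le_max_left _ _)
  have hβ' : 0 < qm - 1 := by linarith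
  have hθlow : ∀ᵐ x ∂ρ, qm - 1 ≤ θ x := by
    filter_upwards [hqθ, hqlow] with x h1 h2; linarith
  have hθ0 : ∀ᵐ x ∂ρ, 0 ≤ θ x := by
    filter_upwards [hθlow] with x h1; linarith
  obtain ⟨T0, hT00, hT0⟩ := modular_fin hθp1 hθ0 hθub hufin
  -- delta convergence
  have hδ : ∀ η : ℝ, 0 < η → ∀ᶠ n in atTop,
      (∫⁻ x, ENNReal.ofReal (|un n x - u x| ^ θ x) ∂ρ) ≤ ENNReal.ofReal η := by
    intro η hη
    set m0 : ℝ := min 1 (η ^ (1 / (qm - 1))) with hm0def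
    have hm00 : 0 < m0 := lt_min one_pos (Real.rpow_pos_of_pos hη _)
    have hev : ∀ᶠ n in atTop,
        luxNorm ρ θ (fun x => un n x - u x) < ENNReal.ofReal m0 := by
      apply hconv.eventually_lt_const
      simpa using hm00
    filter_upwards [hev] with n hn
    obtain ⟨m, hm0', hmlt, hmod⟩ := luxNorm_lt_elim hn
    have hmm0 : m < m0 := by rwa [ENNReal.ofReal_lt_ofReal_iff hm00] at hmlt
    have hm1 : m ≤ 1 := le_trans hmm0.le (min_le_left _ _)
    have hkey := modular_le hm0' hm1 hβ' hθlow hmod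
    refine hkey.trans (ENNReal.ofReal_le_ofReal ?_)
    calc m ^ (qm - 1) ≤ m0 ^ (qm - 1) := Real.rpow_le_rpow hm0'.le hmm0.le hβ'.le
      _ ≤ (η ^ (1 / (qm - 1))) ^ (qm - 1) :=
          Real.rpow_le_rpow hm00.le (min_le_right _ _) hβ'.le
      _ = η := by
          rw [← Real.rpow_mul hη.le, one_div_mul_cancel hβ'.ne', Real.rpow_one]
  -- main quantities
  set K : ℝ := ((Q + 1) / r) ^ (θp / (qm - 1)) with hKdef
  have hK0 : 0 < K := Real.rpow_pos_of_pos (by positivity) _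
  set A : ℝ := K * 4 ^ θp * T0 with hAdef
  have hA0 : 0 ≤ A := by
    have : (0:ℝ) < 4 ^ θp := Real.rpow_pos_of_pos (by norm_num) _
    positivity
  set μ' : ℝ := min 1 (1 / (2 * (A + 1))) with hμdef
  have hμ0 : 0 < μ' := lt_min one_pos (by positivity)
  have hμ1 : μ' ≤ 1 := min_le_left _ _
  have hμsmall : K * μ' * (4 ^ θp * T0) ≤ 1 / 2 := by
    have h1 : μ' ≤ 1 / (2 * (A + 1)) := min_le_right _ _
    have h2 : A * μ' ≤ A * (1 / (2 * (A + 1))) := mul_le_mul_of_nonneg_left h1 hA0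
    have h3 : A * (1 / (2 * (A + 1))) ≤ 1 / 2 := by
      rw [mul_one_div, div_le_div_iff₀ (by positivity) (by norm_num : (0:ℝ) < 2)]
      nlinarith
    calc K * μ' * (4 ^ θp * T0) = A * μ' := by rw [hAdef]; ring
      _ ≤ 1 / 2 := le_trans h2 h3
  set E : ℝ := K * (1 + μ' ^ (1 - Q)) with hEdef
  have hμQ0 : 0 ≤ μ' ^ (1 - Q) := Real.rpow_nonneg hμ0.le _
  have hE0 : 0 < E := by
    rw [hEdef]
    exact mul_pos hK0 (by linarith)
  set D' : ℝ := K * μ' * 2 ^ θp + E with hD'def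
  have h2θp : (0:ℝ) < 2 ^ θp := Real.rpow_pos_of_pos (by norm_num) _
  have hD'0 : 0 < D' := by
    rw [hD'def]
    nlinarith [mul_pos (mul_pos hK0 hμ0) h2θp]
  have hη0 : 0 < 1 / (2 * D') := by positivity
  filter_upwards [hδ (1 / (2 * D')) hη0] with n hδn
  have hmeas1 : Measurable fun x => ENNReal.ofReal ((|un n x| + |u x|) ^ θ x) :=
    (((hun n).abs.add hu.abs).pow hθmeas).ennreal_ofReal
  have hmeas2 : Measurable fun x => ENNReal.ofReal (|un n x - u x| ^ θ x) :=
    (((hun n).sub hu).abs.pow hθmeas).ennreal_ofReal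
  have hpt : ∀ᵐ x ∂ρ, ENNReal.ofReal
      (|(powMap (q x) (un n x) - powMap (q x) (u x)) / r| ^ (θ x / (q x - 1)))
      ≤ ENNReal.ofReal (K * μ') * ENNReal.ofReal ((|un n x| + |u x|) ^ θ x)
        + ENNReal.ofReal E * ENNReal.ofReal (|un n x - u x| ^ θ x) := by
    filter_upwards [hqlow, hqQ, hqθ, hθub] with x h1 h2 h3 h4
    have hm := master hqm1 hQ2 hθp1 hr0 hr1 hμ0 hμ1 h1.le h2 h3 h4 (a := un n x) (b := u x)
    have e : |(powMap (q x) (un n x) - powMap (q x) (u x)) / r|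
        = |phi (q x - 1) (un n x) - phi (q x - 1) (u x)| / r := by
      rw [powMap_eq_phi, powMap_eq_phi, abs_div, abs_of_pos hr0]
    rw [e, ← ENNReal.ofReal_mul (by positivity), ← ENNReal.ofReal_mul hE0.le,
      ← ENNReal.ofReal_add (by positivity) (by positivity)]
    apply ENNReal.ofReal_le_ofReal
    rw [hKdef, hEdef]
    exact hm
  have hchain : ∫⁻ x, ENNReal.ofReal
      (|(powMap (q x) (un n x) - powMap (q x) (u x)) / r| ^ (θ x / (q x - 1))) ∂ρ
      ≤ ENNReal.ofReal (K * μ') * (∫⁻ x, ENNReal.ofReal ((|un n x| + |u x|) ^ θ x) ∂ρ)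
        + ENNReal.ofReal E * (∫⁻ x, ENNReal.ofReal (|un n x - u x| ^ θ x) ∂ρ) := by
    calc _ ≤ ∫⁻ x, (ENNReal.ofReal (K * μ') * ENNReal.ofReal ((|un n x| + |u x|) ^ θ x)
          + ENNReal.ofReal E * ENNReal.ofReal (|un n x - u x| ^ θ x)) ∂ρ :=
          lintegral_mono_ae hpt
      _ = _ := by
          rw [lintegral_add_left (hmeas1.const_mul _),
            lintegral_const_mul' _ _ ENNReal.ofReal_ne_top,
            lintegral_const_mul' _ _ ENNReal.ofReal_ne_top]
  have hpt2 : ∀ᵐ x ∂ρ, ENNReal.ofReal ((|un n x| + |u x|) ^ θ x)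
      ≤ ENNReal.ofReal (2 ^ θp) * ENNReal.ofReal (|un n x - u x| ^ θ x)
        + ENNReal.ofReal (4 ^ θp) * ENNReal.ofReal (|u x| ^ θ x) := by
    filter_upwards [hθ0, hθub] with x h1 h2
    rw [← ENNReal.ofReal_mul h2θp.le,
      ← ENNReal.ofReal_mul (Real.rpow_nonneg (by norm_num : (0:ℝ) ≤ 4) _),
      ← ENNReal.ofReal_add (by positivity) (by positivity)]
    exact ENNReal.ofReal_le_ofReal (sum_rpow_bound h1 h2 (by linarith))
  have hS : (∫⁻ x, ENNReal.ofReal ((|un n x| + |u x|) ^ θ x) ∂ρ)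
      ≤ ENNReal.ofReal (2 ^ θp) * (∫⁻ x, ENNReal.ofReal (|un n x - u x| ^ θ x) ∂ρ)
        + ENNReal.ofReal (4 ^ θp) * ENNReal.ofReal T0 := by
    calc _ ≤ ∫⁻ x, (ENNReal.ofReal (2 ^ θp) * ENNReal.ofReal (|un n x - u x| ^ θ x)
          + ENNReal.ofReal (4 ^ θp) * ENNReal.ofReal (|u x| ^ θ x)) ∂ρ :=
          lintegral_mono_ae hpt2
      _ = ENNReal.ofReal (2 ^ θp) * (∫⁻ x, ENNReal.ofReal (|un n x - u x| ^ θ x) ∂ρ)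
          + ENNReal.ofReal (4 ^ θp) * (∫⁻ x, ENNReal.ofReal (|u x| ^ θ x) ∂ρ) := by
          rw [lintegral_add_left (hmeas2.const_mul _),
            lintegral_const_mul' _ _ ENNReal.ofReal_ne_top,
            lintegral_const_mul' _ _ ENNReal.ofReal_ne_top]
      _ ≤ _ := add_le_add_right (mul_le_mul_right hT0 _) _
  calc _ ≤ ENNReal.ofReal (K * μ') * (∫⁻ x, ENNReal.ofReal ((|un n x| + |u x|) ^ θ x) ∂ρ)
        + ENNReal.ofReal E * (∫⁻ x, ENNReal.ofReal (|un n x - u x| ^ θ x) ∂ρ) := hchain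
    _ ≤ ENNReal.ofReal (K * μ') * (ENNReal.ofReal (2 ^ θp)
          * (∫⁻ x, ENNReal.ofReal (|un n x - u x| ^ θ x) ∂ρ)
          + ENNReal.ofReal (4 ^ θp) * ENNReal.ofReal T0)
        + ENNReal.ofReal E * (∫⁻ x, ENNReal.ofReal (|un n x - u x| ^ θ x) ∂ρ) :=
        add_le_add_left (mul_le_mul_right hS _) _
    _ = ENNReal.ofReal D' * (∫⁻ x, ENNReal.ofReal (|un n x - u x| ^ θ x) ∂ρ)
        + ENNReal.ofReal (K * μ' * (4 ^ θp * T0)) := by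
        have c1 : ENNReal.ofReal (K * μ') * ENNReal.ofReal (2 ^ θp) + ENNReal.ofReal E
            = ENNReal.ofReal D' := by
          rw [← ENNReal.ofReal_mul (by positivity),
            ← ENNReal.ofReal_add (by positivity) hE0.le, ← hD'def]
        have c2 : ENNReal.ofReal (K * μ') * (ENNReal.ofReal (4 ^ θp) * ENNReal.ofReal T0)
            = ENNReal.ofReal (K * μ' * (4 ^ θp * T0)) := by
          rw [← ENNReal.ofReal_mul (Real.rpow_nonneg (by norm_num : (0:ℝ) ≤ 4) _),
            ← ENNReal.ofReal_mul (by positivity)]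
        rw [← c1, ← c2]
        ring
    _ ≤ ENNReal.ofReal D' * ENNReal.ofReal (1 / (2 * D')) + ENNReal.ofReal (1 / 2) :=
        add_le_add (mul_le_mul_right hδn _) (ENNReal.ofReal_le_ofReal hμsmall)
    _ = ENNReal.ofReal (D' * (1 / (2 * D'))) + ENNReal.ofReal (1 / 2) := by
        rw [ENNReal.ofReal_mul hD'0.le]
    _ = ENNReal.ofReal (1 / 2) + ENNReal.ofReal (1 / 2) := by
        rw [show D' * (1 / (2 * D')) = 1 / 2 by field_simp]
    _ = 1 := by
        rw [← ENNReal.ofReal_add (by norm_num) (by norm_num)]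
        norm_num

end M

/-- Continuity of the Nemytskii map `u ↦ |u|^{q(·)−2}u` from `L^{θ(·)}` into
`L^{θ(·)/(q(·)−1)}`: if `|u_n − u|_{θ(·)} → 0` then
`| |u_n|^{q(·)−2}u_n − |u|^{q(·)−2}u |_{θ(·)/(q(·)−1)} → 0`. -/
theorem nemytskii_convergence
    {N : ℕ} (hN : 1 ≤ N) (Ω : Set (Fin N → ℝ)) (hΩ : MeasurableSet Ω)
    (q θ : (Fin N → ℝ) → ℝ) (hq : Measurable q) (hθ : Measurable θ)
    (hqm : 1 < essInf q (volume.restrict Ω))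
    (hqM : ∃ C : ℝ, ∀ᵐ x ∂(volume.restrict Ω), q x ≤ C)
    (hθM : ∃ C : ℝ, ∀ᵐ x ∂(volume.restrict Ω), θ x ≤ C)
    (hqθ : ∀ᵐ x ∂(volume.restrict Ω), q x - 1 ≤ θ x)
    (u : (Fin N → ℝ) → ℝ) (hu : Measurable u)
    (hufin : luxNorm (volume.restrict Ω) θ u < ⊤)
    (un : ℕ → (Fin N → ℝ) → ℝ) (hun : ∀ n, Measurable (un n))
    (hunfin : ∀ n, luxNorm (volume.restrict Ω) θ (un n) < ⊤)
    (hconv : Tendsto (fun n => luxNorm (volume.restrict Ω) θ (fun x => un n x - u x))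
      atTop (𝓝 0)) :
    Tendsto (fun n => luxNorm (volume.restrict Ω) (fun x => θ x / (q x - 1))
        (fun x => powMap (q x) (un n x) - powMap (q x) (u x))) atTop (𝓝 0) :=
  aux (volume.restrict Ω) q θ hq hθ hqm hqM hθM hqθ u hu hufin un hun hconv
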